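/- For every real y and positive a, b, every derivative of order i ≥ 1 of y ↦ log(b + a e^y) is bounded in absolute value by a constant depending only on i (independent of a, b, y). -/

import Mathlib

open Real Polynomial

lemma sigma_hasDerivAt (a b y : ℝ) (ha : 0 < a) (hb : 0 < b) :
    HasDerivAt (fun y => a * Real.exp y / (b + a * Real.exp y))
      (a * Real.exp y / (b + a * Real.exp y)
        - (a * Real.exp y / (b + a * Real.exp y)) ^ 2) y := by
  have hd : 0 < b + a * Real.exp y := by positivity
  have hnum : HasDerivAt (fun y => a * Real.exp y) (a * Real.exp y) y :=
    (Real.hasDerivAt_exp y).const_mul a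
  have hden : HasDerivAt (fun y => b + a * Real.exp y) (a * Real.exp y) y :=
    hnum.const_add b
  have h : HasDerivAt (fun y => a * Real.exp y / (b + a * Real.exp y)) _ y :=
    hnum.div hden hd.ne'
  convert h using 1
  field_simp

lemma key_poly (i : ℕ) (hi : 1 ≤ i) :
    ∃ p : Polynomial ℝ, ∀ a b y : ℝ, 0 < a → 0 < b →
      iteratedDeriv i (fun y => Real.log (b + a * Real.exp y)) y
        = p.eval (a * Real.exp y / (b + a * Real.exp y)) := by
  induction i, hi using Nat.le_induction with
  | base =>
    refine ⟨Polynomial.X, fun a b y ha hb => ?_⟩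
    have hd : 0 < b + a * Real.exp y := by positivity
    have hden : HasDerivAt (fun y => b + a * Real.exp y) (a * Real.exp y) y :=
      ((Real.hasDerivAt_exp y).const_mul a).const_add b
    have hf : HasDerivAt (fun y => Real.log (b + a * Real.exp y))
        (a * Real.exp y / (b + a * Real.exp y)) y := hden.log hd.ne'
    simp [iteratedDeriv_one, hf.deriv]
  | succ i hi ih =>
    obtain ⟨p, hp⟩ := ih
    refine ⟨p.derivative * (Polynomial.X - Polynomial.X ^ 2), fun a b y ha hb => ?_⟩
    rw [iteratedDeriv_succ]
    have heq : iteratedDeriv i (fun y => Real.log (b + a * Real.exp y))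
        = fun y => p.eval (a * Real.exp y / (b + a * Real.exp y)) :=
      funext fun y => hp a b y ha hb
    rw [heq]
    set σ : ℝ → ℝ := fun y => a * Real.exp y / (b + a * Real.exp y) with hσ
    have hder : HasDerivAt (fun y => p.eval (σ y))
        (p.derivative.eval (σ y) * (σ y - (σ y) ^ 2)) y :=
      (Polynomial.hasDerivAt p (σ y)).comp y (sigma_hasDerivAt a b y ha hb)
    rw [hder.deriv]
    simp [hσ]

theorem stmt3 (i : ℕ) (hi : 1 ≤ i) :
    ∃ C : ℝ, ∀ a b y : ℝ, 0 < a → 0 < b →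
      |iteratedDeriv i (fun y => Real.log (b + a * Real.exp y)) y| ≤ C := by
  obtain ⟨p, hp⟩ := key_poly i hi
  obtain ⟨C, hC⟩ := (isCompact_Icc (a := (0:ℝ)) (b := 1)).exists_bound_of_continuousOn
    (f := fun x => p.eval x) (Polynomial.continuous p).continuousOn
  refine ⟨C, fun a b y ha hb => ?_⟩
  rw [hp a b y ha hb]
  have hd : 0 < b + a * Real.exp y := by positivity
  have hmem : a * Real.exp y / (b + a * Real.exp y) ∈ Set.Icc (0:ℝ) 1 := by
    constructor
    · positivity
    · rw [div_le_one hd]; linarith [Real.exp_pos y, hb]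
  simpa using hC _ hmem
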